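/- Let (L, σ) be a σ-extension of a σ-field (K, σ) and let b ∈ L. There exists a nonzero x ∈ L such that σ(x)·b·x^{−1} is σ-algebraic over K if and only if there exists a nonzero finite-dimensional K-vector subspace W of L such that b·σ(W) ⊆ W. -/

import Mathlib

open Polynomial

variable {K : Type*} [Field K]

/-- `skewN σ i a = σ^{i-1}(a)⋯σ(a)·a`, with `skewN σ 0 a = 1`. -/
def skewN (σ : K →+* K) : ℕ → K → K
  | 0, _ => 1
  | i + 1, a => σ (skewN σ i a) * a

/-- Right evaluation of a skew polynomial `P = Σ aᵢ Tⁱ` at `a`: `P(a) = Σ aᵢ Nᵢ(a)`. -/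
noncomputable def skewEval (σ : K →+* K) (P : Polynomial K) (a : K) : K :=
  ∑ i ∈ P.support, P.coeff i * skewN σ i a

/-- Multiplication in the skew polynomial ring `K[T;σ]` (with `T·a = σ(a)·T`),
using `Polynomial K` as the carrier of coefficient sequences. -/
noncomputable def skewMul (σ : K →+* K) (P Q : Polynomial K) : Polynomial K :=
  ∑ i ∈ P.support, ∑ j ∈ Q.support,
    Polynomial.C (P.coeff i * (⇑σ)^[i] (Q.coeff j)) * Polynomial.X ^ (i + j)

/-- In a σ-extension `(L, σL)` of the σ-subfield `K`, the element `a` is σ-algebraic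
over `K`: it is a right root of some nonzero skew polynomial with coefficients in `K`. -/
def IsSkewAlgebraic {L : Type*} [Field L] (σL : L →+* L) (K : Subfield L) (a : L) : Prop :=
  ∃ P : Polynomial L, P ≠ 0 ∧ (∀ i, P.coeff i ∈ K) ∧ skewEval σL P a = 0

section Aux

variable {L : Type*} [Field L]

lemma skewN_zero' (σ : L →+* L) (a : L) : skewN σ 0 a = 1 := rfl

lemma skewN_succ' (σ : L →+* L) (i : ℕ) (a : L) : skewN σ (i+1) a = σ (skewN σ i a) * a := rfl

lemma skewN_conj (σ : L →+* L) (b x : L) (hx : x ≠ 0) (i : ℕ) :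
    skewN σ i (σ x * b * x⁻¹) = (⇑σ)^[i] x * skewN σ i b * x⁻¹ := by
  induction i with
  | zero => simp [skewN_zero', hx]
  | succ i ih =>
    have hσx : σ x ≠ 0 := by simpa using hx
    rw [skewN_succ', skewN_succ', ih, Function.iterate_succ_apply', map_mul, map_mul, map_inv₀]
    field_simp

lemma skewEval_eq_sum_range (σ : L →+* L) (P : Polynomial L) (a : L) {n : ℕ}
    (h : P.natDegree < n) :
    skewEval σ P a = ∑ i ∈ Finset.range n, P.coeff i * skewN σ i a := by
  rw [skewEval]
  apply Finset.sum_subset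
  · intro i hi
    exact Finset.mem_range.mpr (lt_of_le_of_lt (le_natDegree_of_mem_supp i hi) h)
  · intro i _ hi
    simp [notMem_support_iff.mp hi]

lemma v_succ (σ : L →+* L) (b x : L) (i : ℕ) :
    (⇑σ)^[i+1] x * skewN σ (i+1) b = b * σ ((⇑σ)^[i] x * skewN σ i b) := by
  rw [Function.iterate_succ_apply', skewN_succ', map_mul]; ring

end Aux

/-- `b` has a σ-conjugate `σ(x)·b·x⁻¹` that is σ-algebraic over `K` iff some nonzero
finite-dimensional `K`-subspace `W` of `L` satisfies `b·σ(W) ⊆ W`. -/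
theorem stmt_6 {L : Type*} [Field L] (σL : L →+* L) (K : Subfield L)
    (hK : ∀ x ∈ K, σL x ∈ K) (b : L) :
    (∃ x : L, x ≠ 0 ∧ IsSkewAlgebraic σL K (σL x * b * x⁻¹)) ↔
    (∃ W : Submodule K L, W ≠ ⊥ ∧ FiniteDimensional K W ∧ ∀ w ∈ W, b * σL w ∈ W) := by
  constructor
  · rintro ⟨x, hx, P, hP0, hPK, hPe⟩
    set a := σL x * b * x⁻¹ with ha
    set v : ℕ → L := fun i => (⇑σL)^[i] x * skewN σL i b with hv
    set n := P.natDegree with hn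
    have hnpos : 0 < n := by
      rcases Nat.eq_zero_or_pos n with h0 | h
      · exfalso
        have h1 := skewEval_eq_sum_range σL P a (n := 1) (by omega)
        rw [hPe] at h1
        simp only [Finset.sum_range_one, skewN_zero', mul_one] at h1
        exact hP0 (by
          rw [Polynomial.eq_C_of_natDegree_eq_zero h0, ← h1, map_zero])
      · exact h
    have hrel : (∑ i ∈ Finset.range (n+1), P.coeff i * v i) = 0 := by
      have h1 := skewEval_eq_sum_range σL P a (Nat.lt_succ_self n)
      rw [hPe] at h1
      have h2 : ∑ i ∈ Finset.range (n+1), P.coeff i * skewN σL i a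
          = (∑ i ∈ Finset.range (n+1), P.coeff i * v i) * x⁻¹ := by
        rw [Finset.sum_mul]
        refine Finset.sum_congr rfl fun i _ => ?_
        rw [ha, skewN_conj σL b x hx i, hv]; ring
      rw [h2] at h1
      rcases mul_eq_zero.mp h1.symm with h | h
      · exact h
      · exact absurd h (inv_ne_zero hx)
    set W : Submodule K L := Submodule.span K (v '' Set.Iio n) with hW
    have hcn : P.coeff n ≠ 0 := by
      rw [hn]; exact Polynomial.leadingCoeff_ne_zero.mpr hP0
    have hvnW : v n ∈ W := by
      have he : v n = -(P.coeff n)⁻¹ * ∑ i ∈ Finset.range n, P.coeff i * v i := by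
        rw [Finset.sum_range_succ] at hrel
        field_simp
        linear_combination hrel
      rw [he, Finset.mul_sum]
      apply Submodule.sum_mem
      intro i hi
      have hc : -(P.coeff n)⁻¹ * P.coeff i ∈ K :=
        K.mul_mem (K.neg_mem (K.inv_mem (hPK n))) (hPK i)
      have h3 : -(P.coeff n)⁻¹ * (P.coeff i * v i) = (-(P.coeff n)⁻¹ * P.coeff i) * v i := by
        ring
      rw [h3]
      exact W.smul_mem (⟨_, hc⟩ : K)
        (Submodule.subset_span ⟨i, Finset.mem_range.mp hi, rfl⟩)
    have hgen : ∀ i < n, b * σL (v i) ∈ W := by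
      intro i hi
      have h4 : b * σL (v i) = v (i+1) := (v_succ σL b x i).symm
      rw [h4]
      rcases lt_or_eq_of_le (Nat.succ_le_of_lt hi) with h | h
      · exact Submodule.subset_span ⟨i+1, h, rfl⟩
      · rw [show i + 1 = n from h]; exact hvnW
    refine ⟨W, ?_, FiniteDimensional.span_of_finite K ((Set.finite_Iio n).image v), ?_⟩
    · intro hbot
      have hxW : x ∈ W := Submodule.subset_span ⟨0, hnpos, by simp [hv, skewN_zero']⟩
      rw [hbot] at hxW
      exact hx (by simpa using hxW)
    · intro w hw
      induction hw using Submodule.span_induction with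
      | mem y hy => obtain ⟨i, hi, rfl⟩ := hy; exact hgen i hi
      | zero => simpa using W.zero_mem
      | add y z hy hz ihy ihz => rw [map_add, mul_add]; exact W.add_mem ihy ihz
      | smul k y hy ihy =>
        have h5 : b * σL (k • y) = (⟨σL k, hK k k.2⟩ : K) • (b * σL y) := by
          show b * σL (↑k * y) = σL ↑k * (b * σL y)
          rw [map_mul]; ring
        rw [h5]; exact W.smul_mem _ ihy
  · rintro ⟨W, hWbot, hWfd, hWcl⟩
    obtain ⟨x, hxW, hx⟩ := Submodule.exists_mem_ne_zero_of_ne_bot hWbot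
    set v : ℕ → L := fun i => (⇑σL)^[i] x * skewN σL i b with hv
    have hvW : ∀ i, v i ∈ W := by
      intro i
      induction i with
      | zero => simp [hv, skewN_zero', hxW]
      | succ i ih =>
        have : v (i+1) = b * σL (v i) := v_succ σL b x i
        rw [this]; exact hWcl _ ih
    set d := Module.finrank K W with hd
    set u : Fin (d+1) → W := fun i => ⟨v i, hvW i⟩ with hu
    have hnli : ¬ LinearIndependent K u := by
      intro h
      have := h.fintype_card_le_finrank
      simp [Fintype.card_fin] at this
      exact lt_irrefl _ this
    obtain ⟨g, hg0, i0, hi0⟩ := Fintype.not_linearIndependent_iff.mp hnli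
    have hsum : ∑ i : Fin (d+1), (g i : L) * v i = 0 := by
      have h6 := congrArg (Subtype.val) hg0
      simpa [hu, Subfield.smul_def, smul_eq_mul] using h6
    set P : Polynomial L := ∑ i : Fin (d+1), Polynomial.C (g i : L) * Polynomial.X ^ (i : ℕ)
      with hP
    have hcoeff : ∀ j, P.coeff j = if h : j < d + 1 then ((g ⟨j, h⟩ : L)) else 0 := by
      intro j
      rw [hP, Polynomial.finset_sum_coeff]
      simp only [Polynomial.coeff_C_mul, Polynomial.coeff_X_pow, mul_ite, mul_one, mul_zero]
      split_ifs with h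
      · rw [Finset.sum_eq_single (⟨j, h⟩ : Fin (d+1))]
        · simp
        · intro i _ hij
          have hne : (i : ℕ) ≠ j := fun hh => hij (Fin.ext hh)
          rw [if_neg (Ne.symm hne)]
        · intro h'; exact absurd (Finset.mem_univ _) h'
      · refine Finset.sum_eq_zero fun i _ => ?_
        have hlt := i.isLt
        have hne : (i : ℕ) ≠ j := by omega
        rw [if_neg (Ne.symm hne)]
    have hdeg : P.natDegree < d + 1 := by
      apply Nat.lt_succ_of_le
      apply Polynomial.natDegree_sum_le_of_forall_le
      intro i _
      exact le_trans (Polynomial.natDegree_C_mul_X_pow_le _ _) (Fin.is_le i)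
    refine ⟨x, hx, P, ?_, ?_, ?_⟩
    · intro h
      apply hi0
      have := hcoeff i0
      rw [h] at this
      simp only [Polynomial.coeff_zero] at this
      rw [dif_pos i0.isLt] at this
      exact Subtype.ext (by simpa using this.symm)
    · intro i
      rw [hcoeff i]
      split_ifs with h
      · exact (g ⟨i, h⟩).2
      · exact K.zero_mem
    · rw [skewEval_eq_sum_range σL P _ hdeg]
      have h7 : ∀ j ∈ Finset.range (d+1),
          P.coeff j * skewN σL j (σL x * b * x⁻¹)
            = (P.coeff j * ((⇑σL)^[j] x * skewN σL j b)) * x⁻¹ := by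
        intro j _
        rw [skewN_conj σL b x hx j]; ring
      rw [Finset.sum_congr rfl h7, ← Finset.sum_mul]
      have h8 : ∑ j ∈ Finset.range (d+1), P.coeff j * ((⇑σL)^[j] x * skewN σL j b) = 0 := by
        rw [← Fin.sum_univ_eq_sum_range (fun j => P.coeff j * ((⇑σL)^[j] x * skewN σL j b))]
        rw [← hsum]
        refine Finset.sum_congr rfl fun i _ => ?_
        rw [hcoeff (i : ℕ), dif_pos i.isLt, hv]
      rw [h8, zero_mul]
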